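/- Let (Ω, 𝓕, P) be a standard Borel probability space. Let X : Ω → 𝒳 and Y : Ω → 𝒴 be measurable maps into measurable spaces, and let ξ : Ω → Ξ be a measurable map that is independent of the pair (X, Y). Let S := g(X, Y) for a measurable g : 𝒳 × 𝒴 → ℝ and R := h(X, ξ) for a measurable h : 𝒳 × Ξ → {0,1}. Then S and R are conditionally independent given the σ-algebra mX generated by X. -/

import Mathlib

open MeasureTheory ProbabilityTheory

/-- Key computation: if the σ-algebra `mI` is independent of `mXY ≥ mX`, `C` is
`mXY`-measurable and `V` is `mI`-measurable, then
`E[1_{C ∩ V} | mX] = P(V) • E[1_C | mX]` a.e. -/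
lemma condexp_indicator_inter_of_indep {Ω : Type*} {mX mXY mI : MeasurableSpace Ω}
    [m0 : MeasurableSpace Ω]
    (P : Measure Ω) [IsProbabilityMeasure P]
    (h12 : mX ≤ mXY) (h2 : mXY ≤ m0) (hI : mI ≤ m0)
    (hindep : Indep mI mXY P)
    {C V : Set Ω} (hC : MeasurableSet[mXY] C) (hV : MeasurableSet[mI] V) :
    (P⟦C ∩ V | mX⟧) =ᵐ[P] fun ω => (P V).toReal * (P⟦C | mX⟧) ω := by
  haveI : SigmaFinite (P.trim h2) := by
    haveI : IsFiniteMeasure (P.trim h2) := isFiniteMeasure_trim h2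
    infer_instance
  have hCm : MeasurableSet[m0] C := h2 _ hC
  have hVm : MeasurableSet[m0] V := hI _ hV
  -- Step 1: `E[1_V | mXY] = P(V)` a.e.
  have h1 : (P[V.indicator (fun _ => (1 : ℝ)) | mXY]) =ᵐ[P] fun _ => (P V).toReal := by
    have := condExp_indep_eq (μ := P) hI h2
      (f := V.indicator (fun _ => (1 : ℝ)))
      (stronglyMeasurable_const.indicator hV) hindep
    refine this.trans ?_
    refine Filter.Eventually.of_forall fun ω => ?_
    rw [integral_indicator_const _ hVm]
    simp [Measure.real]
  -- Step 2: `E[1_{C ∩ V} | mXY] = P(V) • 1_C` a.e.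
  have h_eq : (C ∩ V).indicator (fun _ => (1 : ℝ))
      = C.indicator (fun _ => (1 : ℝ)) * V.indicator (fun _ => (1 : ℝ)) := by
    exact Set.inter_indicator_one (s := C) (t := V) (M₀ := ℝ) (ι := Ω)
  have h2' : (P[(C ∩ V).indicator (fun _ => (1 : ℝ)) | mXY])
      =ᵐ[P] fun ω => (P V).toReal * C.indicator (fun _ => (1 : ℝ)) ω := by
    rw [h_eq]
    have h_mul := condExp_mul_of_stronglyMeasurable_left (μ := P) (m := mXY)
      (f := C.indicator (fun _ => (1 : ℝ))) (g := V.indicator (fun _ => (1 : ℝ)))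
      (stronglyMeasurable_const.indicator hC)
      (by rw [← h_eq]; exact (integrable_const (1 : ℝ)).indicator (hCm.inter hVm))
      ((integrable_const (1 : ℝ)).indicator hVm)
    refine h_mul.trans ?_
    filter_upwards [h1] with ω hω
    simp only [Pi.mul_apply, hω, mul_comm]
  -- Step 3: tower property
  calc (P⟦C ∩ V | mX⟧)
      =ᵐ[P] P[(P[(C ∩ V).indicator (fun _ => (1 : ℝ)) | mXY]) | mX] :=
        (condExp_condExp_of_le h12 h2).symm
    _ =ᵐ[P] P[(fun ω => (P V).toReal * C.indicator (fun _ => (1 : ℝ)) ω) | mX] :=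
        condExp_congr_ae h2'
    _ =ᵐ[P] fun ω => (P V).toReal * (P⟦C | mX⟧) ω := by
        have heq : (fun ω => (P V).toReal * C.indicator (fun _ => (1 : ℝ)) ω)
            = (P V).toReal • C.indicator (fun _ => (1 : ℝ)) := rfl
        rw [heq]
        filter_upwards [condExp_smul (μ := P) (m := mX) ((P V).toReal)
          (C.indicator (fun _ => (1 : ℝ)))] with ω hω
        simpa using hω

/-- **Proposition 2.2 (Independent evaluation data ensures MAR).**
If `S = g (X, Y)` is a measurable function of the test point `(X, Y)` and the abstention
decision `R = h (X, ξ)` is a measurable function of `X` and internal randomness `ξ`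
independent of `(X, Y)`, then `S` and `R` are conditionally independent given `σ(X)`. -/
theorem eval_indep_ensures_MAR
    {Ω 𝒳 𝒴 Ξ : Type*} [MeasurableSpace Ω] [StandardBorelSpace Ω]
    [MeasurableSpace 𝒳] [MeasurableSpace 𝒴] [MeasurableSpace Ξ]
    (P : Measure Ω) [IsProbabilityMeasure P]
    (X : Ω → 𝒳) (Y : Ω → 𝒴) (ξ : Ω → Ξ)
    (hX : Measurable X) (hY : Measurable Y) (hξ : Measurable ξ)
    (hindep : IndepFun ξ (fun ω => (X ω, Y ω)) P)
    (g : 𝒳 × 𝒴 → ℝ) (hg : Measurable g)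
    (h : 𝒳 × Ξ → Bool) (hh : Measurable h) :
    CondIndepFun (MeasurableSpace.comap X inferInstance) hX.comap_le
      (fun ω => g (X ω, Y ω)) (fun ω => h (X ω, ξ ω)) P := by
  classical
  have hXY : Measurable fun ω => (X ω, Y ω) := hX.prodMk hY
  have hXξ : Measurable fun ω => (X ω, ξ ω) := hX.prodMk hξ
  have hmXY_le : MeasurableSpace.comap (fun ω => (X ω, Y ω)) inferInstance
      ≤ ‹MeasurableSpace Ω› := hXY.comap_le
  have hmX_le : MeasurableSpace.comap X inferInstance ≤ ‹MeasurableSpace Ω› := hX.comap_le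
  have hmX_le_XY : MeasurableSpace.comap X inferInstance
      ≤ MeasurableSpace.comap (fun ω => (X ω, Y ω)) inferInstance := by
    intro s hs
    obtain ⟨u, hu, rfl⟩ := hs
    exact ⟨u ×ˢ Set.univ, hu.prod MeasurableSet.univ, by ext ω; simp⟩
  have h_indep' : Indep (MeasurableSpace.comap ξ inferInstance)
      (MeasurableSpace.comap (fun ω => (X ω, Y ω)) inferInstance) P := hindep
  -- main step: conditional independence of the pairs
  have main : CondIndepFun (MeasurableSpace.comap X inferInstance) hX.comap_le
      (fun ω => (X ω, Y ω)) (fun ω => (X ω, ξ ω)) P := by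
    rw [condIndepFun_iff_condIndep]
    -- π-system for the right σ-algebra: sets `X ⁻¹' u ∩ ξ ⁻¹' v`
    have hp2_gen : MeasurableSpace.comap (fun ω => (X ω, ξ ω))
          (inferInstance : MeasurableSpace (𝒳 × Ξ))
        = MeasurableSpace.generateFrom
            {B | ∃ u v, MeasurableSet u ∧ MeasurableSet v ∧ B = X ⁻¹' u ∩ ξ ⁻¹' v} := by
      refine le_antisymm ?_ ?_
      · conv_lhs => rw [show (inferInstance : MeasurableSpace (𝒳 × Ξ)) =
          Prod.instMeasurableSpace from rfl, ← generateFrom_prod]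
        rw [MeasurableSpace.comap_generateFrom]
        refine MeasurableSpace.generateFrom_le fun t ht => ?_
        obtain ⟨s, ⟨u, hu, w, hw, rfl⟩, rfl⟩ := ht
        exact MeasurableSpace.measurableSet_generateFrom ⟨u, w, hu, hw, rfl⟩
      · refine MeasurableSpace.generateFrom_le ?_
        rintro t ⟨u, w, hu, hw, rfl⟩
        exact ⟨u ×ˢ w, hu.prod hw, rfl⟩
    rw [hp2_gen,
      (@MeasurableSpace.generateFrom_measurableSet Ω
        (MeasurableSpace.comap (fun ω => (X ω, Y ω)) inferInstance)).symm]
    refine CondIndepSets.condIndep' (fun s hs => hmXY_le _ hs) ?_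
      (@MeasurableSpace.isPiSystem_measurableSet Ω (MeasurableSpace.comap (fun ω => (X ω, Y ω)) inferInstance))
      ?_ ?_
    · rintro s ⟨u, w, hu, hw, rfl⟩
      exact (hX hu).inter (hξ hw)
    · rintro s ⟨u₁, w₁, hu₁, hw₁, rfl⟩ t ⟨u₂, w₂, hu₂, hw₂, rfl⟩ -
      exact ⟨u₁ ∩ u₂, w₁ ∩ w₂, hu₁.inter hu₂, hw₁.inter hw₂, by
        simp only [Set.preimage_inter]; ac_rfl⟩
    -- now the condexp computation
    have hiff := condIndepSets_iff (m' := MeasurableSpace.comap X inferInstance)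
        (hm' := hX.comap_le)
        {s | MeasurableSet[MeasurableSpace.comap (fun ω => (X ω, Y ω)) inferInstance] s}
        {B | ∃ u v, MeasurableSet u ∧ MeasurableSet v ∧ B = X ⁻¹' u ∩ ξ ⁻¹' v}
        (fun s hs => hmXY_le _ hs)
        (by rintro s ⟨u, w, hu, hw, rfl⟩; exact (hX hu).inter (hξ hw)) P
    refine hiff.mpr ?_
    rintro t1 t2 ht1 ⟨u, v, hu, hv, rfl⟩
    have ht1' : MeasurableSet[MeasurableSpace.comap (fun ω => (X ω, Y ω)) inferInstance] t1 :=
      ht1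
    have hA_mX : MeasurableSet[MeasurableSpace.comap X inferInstance] (X ⁻¹' u) := ⟨u, hu, rfl⟩
    have hA_mXY : MeasurableSet[MeasurableSpace.comap (fun ω => (X ω, Y ω)) inferInstance]
        (X ⁻¹' u) := hmX_le_XY _ hA_mX
    have hV_mI : MeasurableSet[MeasurableSpace.comap ξ inferInstance] (ξ ⁻¹' v) := ⟨v, hv, rfl⟩
    have hAm : MeasurableSet (X ⁻¹' u) := hX hu
    have ht1m : MeasurableSet t1 := hmXY_le _ ht1'
    -- LHS
    have h_left : (P⟦t1 ∩ (X ⁻¹' u ∩ ξ ⁻¹' v) | MeasurableSpace.comap X inferInstance⟧)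
        =ᵐ[P] fun ω => (P (ξ ⁻¹' v)).toReal
          * ((P⟦t1 ∩ X ⁻¹' u | MeasurableSpace.comap X inferInstance⟧) ω) := by
      rw [show t1 ∩ (X ⁻¹' u ∩ ξ ⁻¹' v) = (t1 ∩ X ⁻¹' u) ∩ ξ ⁻¹' v from
        (Set.inter_assoc _ _ _).symm]
      exact condexp_indicator_inter_of_indep P hmX_le_XY hmXY_le hξ.comap_le h_indep'
        (ht1'.inter hA_mXY) hV_mI
    -- pull out the indicator of `X ⁻¹' u`
    have h_eq : (t1 ∩ X ⁻¹' u).indicator (fun _ => (1 : ℝ))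
        = (X ⁻¹' u).indicator (fun _ => (1 : ℝ)) * t1.indicator (fun _ => (1 : ℝ)) := by
      rw [Set.inter_comm]
      exact Set.inter_indicator_one (s := X ⁻¹' u) (t := t1) (M₀ := ℝ) (ι := Ω)
    have h_pull : (P⟦t1 ∩ X ⁻¹' u | MeasurableSpace.comap X inferInstance⟧)
        =ᵐ[P] fun ω => (X ⁻¹' u).indicator (fun _ => (1 : ℝ)) ω
          * (P⟦t1 | MeasurableSpace.comap X inferInstance⟧) ω := by
      show (P[(t1 ∩ X ⁻¹' u).indicator (fun _ => (1 : ℝ))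
        | MeasurableSpace.comap X inferInstance]) =ᵐ[P] _
      rw [h_eq]
      exact condExp_mul_of_stronglyMeasurable_left (stronglyMeasurable_const.indicator hA_mX)
        (by rw [← h_eq]; exact (integrable_const (1 : ℝ)).indicator (ht1m.inter hAm))
        ((integrable_const (1 : ℝ)).indicator ht1m)
    -- RHS factor
    have h_right : (P⟦X ⁻¹' u ∩ ξ ⁻¹' v | MeasurableSpace.comap X inferInstance⟧)
        =ᵐ[P] fun ω => (P (ξ ⁻¹' v)).toReal * (X ⁻¹' u).indicator (fun _ => (1 : ℝ)) ω := by
      have haux := condexp_indicator_inter_of_indep P hmX_le_XY hmXY_le hξ.comap_le h_indep'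
        hA_mXY hV_mI
      refine haux.trans ?_
      have hAeq : (P⟦X ⁻¹' u | MeasurableSpace.comap X inferInstance⟧)
          = (X ⁻¹' u).indicator (fun _ => (1 : ℝ)) :=
        condExp_of_stronglyMeasurable hmX_le
          (stronglyMeasurable_const.indicator hA_mX)
          ((integrable_const (1 : ℝ)).indicator hAm)
      rw [hAeq]
    filter_upwards [h_left, h_pull, h_right] with ω h₁ h₂ h₃
    simp only [Pi.mul_apply]
    rw [h₁, h₂, h₃]
    ring
  exact main.comp hg hh
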